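/- If Σ = aaᵀ is a rank-one n×n positive semidefinite matrix with a ∈ ℝⁿ and 0 ≤ ρ < max_i a_i², then φ(ρ) := max{xᵀΣx − ρ·Card(x) : ‖x‖₂ = 1} equals Σ_{i=1}ⁿ (a_i² − ρ)₊. -/
import Mathlib


open Matrix
open scoped BigOperators

/-- Number of nonzero entries of a vector. -/
noncomputable def card {n : ℕ} (x : Fin n → ℝ) : ℕ := Set.ncard {i | x i ≠ 0}

lemma card_eq_filter {n : ℕ} (x : Fin n → ℝ) :
    card x = (Finset.univ.filter (fun i => x i ≠ 0)).card := by
  classical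
  rw [card]
  rw [show {i | x i ≠ 0} = ((Finset.univ.filter (fun i => x i ≠ 0) : Finset (Fin n)) : Set (Fin n)) by
    ext i; simp]
  exact Set.ncard_coe_finset _

lemma quad_eq {n : ℕ} (a x : Fin n → ℝ) :
    x ⬝ᵥ (vecMulVec a a).mulVec x = (∑ i, a i * x i) ^ 2 := by
  simp only [dotProduct, mulVec, vecMulVec_apply, sq, Finset.sum_mul, Finset.mul_sum]
  refine Finset.sum_congr rfl fun i _ => Finset.sum_congr rfl fun j _ => by ring

/-- for a rank-one PSD matrix `Σ = aaᵀ` and `0 ≤ ρ < max_i a_i²`,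
`φ(ρ) = ∑ i, (a_i² − ρ)₊`. -/
theorem stmt12 {n : ℕ} (a : Fin n → ℝ) (ρ : ℝ) (hρ0 : 0 ≤ ρ) (hρ1 : ∃ i, ρ < a i ^ 2) :
    sSup {v | ∃ x : Fin n → ℝ, (∑ i, x i ^ 2) = 1 ∧
        v = x ⬝ᵥ (vecMulVec a a).mulVec x - ρ * (card x : ℝ)} =
      ∑ i, max (a i ^ 2 - ρ) 0 := by
  classical
  obtain ⟨i0, hi0⟩ := hρ1
  set T : Finset (Fin n) := Finset.univ.filter (fun i => ρ < a i ^ 2) with hT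
  have hi0T : i0 ∈ T := by simp [hT, hi0]
  set c : ℝ := ∑ i ∈ T, a i ^ 2 with hc
  have hcpos : 0 < c :=
    Finset.sum_pos (fun i hi => lt_of_le_of_lt hρ0 (by simpa [hT] using hi)) ⟨i0, hi0T⟩
  have hsqrt : (0:ℝ) < Real.sqrt c := Real.sqrt_pos.mpr hcpos
  -- target rewriting
  have htarget : ∑ i, max (a i ^ 2 - ρ) 0 = ∑ i ∈ T, (a i ^ 2 - ρ) := by
    rw [hT, Finset.sum_filter]
    refine Finset.sum_congr rfl fun i _ => ?_
    by_cases h : ρ < a i ^ 2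
    · simp [h, max_eq_left (sub_nonneg.mpr h.le)]
    · simp [h, max_eq_right (sub_nonpos.mpr (not_lt.mp h))]
  -- the optimal witness
  set x : Fin n → ℝ := fun i => if i ∈ T then a i / Real.sqrt c else 0 with hx
  have hxsq : ∀ i, x i ^ 2 = if i ∈ T then a i ^ 2 / c else 0 := by
    intro i
    by_cases h : i ∈ T <;> simp [hx, h, div_pow, Real.sq_sqrt hcpos.le]
  have hxnorm : ∑ i, x i ^ 2 = 1 := by
    simp only [hxsq]
    rw [Finset.sum_ite_mem, Finset.univ_inter, ← Finset.sum_div, ← hc,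
      div_self hcpos.ne']
  have hsupp : {i | x i ≠ 0} = (T : Set (Fin n)) := by
    ext i
    by_cases h : i ∈ T
    · have ha : a i ≠ 0 := by
        intro h0
        have := (Finset.mem_filter.mp (hT ▸ h)).2
        rw [h0] at this; simp at this; linarith
      simp [hx, h, div_eq_zero_iff, ha, hsqrt.ne']
    · simp [hx, h]
  have hcard : (card x : ℝ) = T.card := by
    rw [card, hsupp, Set.ncard_coe_finset]
  have hdot : ∑ i, a i * x i = Real.sqrt c := by
    simp only [hx, mul_ite, mul_zero]
    rw [Finset.sum_ite_mem, Finset.univ_inter]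
    have : ∑ i ∈ T, a i * (a i / Real.sqrt c) = (∑ i ∈ T, a i ^ 2) / Real.sqrt c := by
      rw [Finset.sum_div]
      exact Finset.sum_congr rfl fun i _ => by ring
    rw [this, ← hc, div_eq_iff hsqrt.ne']
    exact (Real.mul_self_sqrt hcpos.le).symm
  have hval : x ⬝ᵥ (vecMulVec a a).mulVec x - ρ * (card x : ℝ)
      = ∑ i, max (a i ^ 2 - ρ) 0 := by
    rw [quad_eq, hdot, Real.sq_sqrt hcpos.le, hcard, htarget, Finset.sum_sub_distrib,
      Finset.sum_const, ← hc]
    push_cast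
    ring
  have hmem : (∑ i, max (a i ^ 2 - ρ) 0) ∈ {v | ∃ x : Fin n → ℝ, (∑ i, x i ^ 2) = 1 ∧
      v = x ⬝ᵥ (vecMulVec a a).mulVec x - ρ * (card x : ℝ)} :=
    ⟨x, hxnorm, hval.symm⟩
  -- upper bound
  have hub : ∀ v ∈ {v | ∃ x : Fin n → ℝ, (∑ i, x i ^ 2) = 1 ∧
      v = x ⬝ᵥ (vecMulVec a a).mulVec x - ρ * (card x : ℝ)},
      v ≤ ∑ i, max (a i ^ 2 - ρ) 0 := by
    rintro v ⟨y, hy1, rfl⟩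
    set S : Finset (Fin n) := Finset.univ.filter (fun i => y i ≠ 0) with hS
    have h1 : ∑ i, a i * y i = ∑ i ∈ S, a i * y i := by
      rw [hS]
      exact (Finset.sum_filter_of_ne (fun i _ h => by
        intro hy; rw [hy, mul_zero] at h; exact h rfl)).symm
    have h2 : ∑ i ∈ S, y i ^ 2 = 1 := by
      rw [← hy1, hS]
      exact Finset.sum_filter_of_ne (fun i _ h => by
        intro hy; rw [hy] at h; simp at h)
    have hcs : (∑ i ∈ S, a i * y i) ^ 2 ≤ ∑ i ∈ S, a i ^ 2 := by
      calc (∑ i ∈ S, a i * y i) ^ 2 ≤ (∑ i ∈ S, a i ^ 2) * ∑ i ∈ S, y i ^ 2 :=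
            Finset.sum_mul_sq_le_sq_mul_sq S a y
        _ = ∑ i ∈ S, a i ^ 2 := by rw [h2, mul_one]
    have hcardy : (card y : ℝ) = S.card := by
      rw [card_eq_filter, hS]
    rw [quad_eq, h1, hcardy]
    calc (∑ i ∈ S, a i * y i) ^ 2 - ρ * S.card
        ≤ (∑ i ∈ S, a i ^ 2) - ρ * S.card := by linarith
      _ = ∑ i ∈ S, (a i ^ 2 - ρ) := by
          rw [Finset.sum_sub_distrib, Finset.sum_const]; push_cast; ring
      _ ≤ ∑ i ∈ S, max (a i ^ 2 - ρ) 0 :=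
          Finset.sum_le_sum fun i _ => le_max_left _ _
      _ ≤ ∑ i, max (a i ^ 2 - ρ) 0 :=
          Finset.sum_le_sum_of_subset_of_nonneg (Finset.subset_univ S)
            (fun i _ _ => le_max_right _ _)
  exact le_antisymm (csSup_le ⟨_, hmem⟩ hub) (le_csSup ⟨_, hub⟩ hmem)
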